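/- Let n, d ≥ 1, k ≥ 1, ρ > 0, and let N be a positive integer. Let X be an n×d real matrix with rows x¹, …, xⁿ ∈ ℝ^d, let Σ̂ := (1/n) XᵀX, and suppose (v_1, …, v_d) is an orthonormal basis of ℝ^d with Σ̂ = Σ_{j=1}^d λ_j v_j v_jᵀ and λ_1 ≥ ⋯ ≥ λ_d ≥ 0. Define opt := sup { (1/n)·Σ_{i=1}^n (max(|⟨xⁱ, v⟩| − ρ, 0))² : v ∈ ℝ^d, ‖v‖₂ = 1, ‖v‖₀ ≤ k }, and define ub as the supremum of Σ_{j=1}^d λ_j·(Σ_{ℓ=−N}^N (ℓ/N)²·η_j(ℓ)) + (1/n)·Σ_{i=1}^n φ_ρ(⟨xⁱ, v⟩) over all pairs (v, η) such that ‖v‖₂ ≤ 1, ‖v‖₀ ≤ k, and for each j ∈ {1,…,d} the vector η_j = (η_j(−N),…,η_j(N)) of nonnegative reals is SOS-II with Σ_{ℓ=−N}^N η_j(ℓ) = 1 and ⟨v_j, v⟩ = Σ_{ℓ=−N}^N (ℓ/N)·η_j(ℓ). Then opt ≤ ub ≤ opt + (1/(4N²))·Σ_{j=1}^d λ_j. 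-/

import Mathlib

open Matrix

/-- A vector `η` of `2N+1` nonnegative reals indexed by `ℓ ∈ {-N, …, N}` is SOS-II if
at most two of its entries are nonzero, and if two are nonzero they are consecutive. -/
def IsSOSII (N : ℕ) (η : ℤ → ℝ) : Prop :=
  (∀ ℓ ∈ Finset.Icc (-(N : ℤ)) (N : ℤ), 0 ≤ η ℓ) ∧
  ∃ ℓ₀ : ℤ, ∀ ℓ ∈ Finset.Icc (-(N : ℤ)) (N : ℤ), η ℓ ≠ 0 → ℓ = ℓ₀ ∨ ℓ = ℓ₀ + 1

lemma stmt6_twoPoint (N : ℕ) (η : ℤ → ℝ) (ℓ₀ : ℤ)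
    (hsupp : ∀ ℓ ∈ Finset.Icc (-(N:ℤ)) (N:ℤ), η ℓ ≠ 0 → ℓ = ℓ₀ ∨ ℓ = ℓ₀ + 1)
    (f : ℤ → ℝ) :
    ∑ ℓ ∈ Finset.Icc (-(N:ℤ)) (N:ℤ), f ℓ * η ℓ =
      f ℓ₀ * (if ℓ₀ ∈ Finset.Icc (-(N:ℤ)) (N:ℤ) then η ℓ₀ else 0)
      + f (ℓ₀+1) * (if ℓ₀+1 ∈ Finset.Icc (-(N:ℤ)) (N:ℤ) then η (ℓ₀+1) else 0) := by
  have h1 : ∀ ℓ ∈ Finset.Icc (-(N:ℤ)) (N:ℤ), f ℓ * η ℓ =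
      (if ℓ = ℓ₀ then f ℓ * η ℓ else 0) + (if ℓ = ℓ₀+1 then f ℓ * η ℓ else 0) := by
    intro ℓ hℓ
    by_cases h0 : η ℓ = 0
    · simp [h0]
    · rcases hsupp ℓ hℓ h0 with h|h <;> subst h <;> simp
  rw [Finset.sum_congr rfl h1, Finset.sum_add_distrib, Finset.sum_ite_eq',
    Finset.sum_ite_eq']
  split_ifs <;> ring

lemma stmt6_moment (N : ℕ) (hN : 1 ≤ N) (η : ℤ → ℝ) (hsos : IsSOSII N η)
    (hsum : ∑ ℓ ∈ Finset.Icc (-(N:ℤ)) (N:ℤ), η ℓ = 1) :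
    (∑ ℓ ∈ Finset.Icc (-(N:ℤ)) (N:ℤ), ((ℓ:ℝ)/N) * η ℓ)^2
      ≤ ∑ ℓ ∈ Finset.Icc (-(N:ℤ)) (N:ℤ), ((ℓ:ℝ)/N)^2 * η ℓ ∧
    ∑ ℓ ∈ Finset.Icc (-(N:ℤ)) (N:ℤ), ((ℓ:ℝ)/N)^2 * η ℓ
      ≤ (∑ ℓ ∈ Finset.Icc (-(N:ℤ)) (N:ℤ), ((ℓ:ℝ)/N) * η ℓ)^2 + 1/(4*N^2) := by
  obtain ⟨hnn, ℓ₀, hsupp⟩ := hsos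
  have hN0 : (0:ℝ) < N := by exact_mod_cast hN
  obtain ⟨p, hpdef⟩ : ∃ p : ℝ, p = if ℓ₀ ∈ Finset.Icc (-(N:ℤ)) (N:ℤ) then η ℓ₀ else 0 := ⟨_, rfl⟩
  obtain ⟨q, hqdef⟩ : ∃ q : ℝ, q = if ℓ₀+1 ∈ Finset.Icc (-(N:ℤ)) (N:ℤ) then η (ℓ₀+1) else 0 := ⟨_, rfl⟩
  have hp : 0 ≤ p := by rw [hpdef]; split_ifs with h; exacts [hnn _ h, le_rfl]
  have hq : 0 ≤ q := by rw [hqdef]; split_ifs with h; exacts [hnn _ h, le_rfl]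
  have hpq : p + q = 1 := by
    have := stmt6_twoPoint N η ℓ₀ hsupp (fun _ => 1)
    simp only [one_mul] at this
    rw [hpdef, hqdef]; linarith [hsum, this]
  have hm := stmt6_twoPoint N η ℓ₀ hsupp (fun ℓ => (ℓ:ℝ)/N)
  have hM := stmt6_twoPoint N η ℓ₀ hsupp (fun ℓ => ((ℓ:ℝ)/N)^2)
  rw [← hpdef, ← hqdef] at hm hM
  have hcast : ((ℓ₀+1:ℤ):ℝ) = (ℓ₀:ℝ) + 1 := by push_cast; ring
  rw [hcast] at hm hM
  rw [hm, hM]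
  have hNne : (N:ℝ) ≠ 0 := ne_of_gt hN0
  have key : ((ℓ₀:ℝ)/N)^2 * p + (((ℓ₀:ℝ)+1)/N)^2 * q
      - ((ℓ₀:ℝ)/N * p + ((ℓ₀:ℝ)+1)/N * q)^2 = p*q/N^2 := by
    have hq1 : q = 1 - p := by linarith
    rw [hq1]; field_simp; ring
  constructor
  · nlinarith [mul_nonneg hp hq, sq_nonneg ((N:ℝ)), pow_pos hN0 2,
      div_nonneg (mul_nonneg hp hq) (le_of_lt (pow_pos hN0 2))]
  · have h14 : p*q ≤ 1/4 := by nlinarith [sq_nonneg (p - q)]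
    have h2 : p*q/N^2 ≤ (1/4)/N^2 := by gcongr
    have heq : (1/4)/(N:ℝ)^2 = 1/(4*N^2) := by ring
    linarith [key, h2, heq]

lemma stmt6_exists_eta (N : ℕ) (hN : 1 ≤ N) (t : ℝ) (ht : |t| ≤ 1) :
    ∃ η : ℤ → ℝ, IsSOSII N η ∧ (∑ ℓ ∈ Finset.Icc (-(N:ℤ)) (N:ℤ), η ℓ = 1) ∧
      (∑ ℓ ∈ Finset.Icc (-(N:ℤ)) (N:ℤ), ((ℓ:ℝ)/N) * η ℓ = t) := by
  have hN0 : (0:ℝ) < N := by exact_mod_cast hN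
  obtain ⟨ht1, ht2⟩ := abs_le.mp ht
  have hNt1 : (N:ℝ)*t ≤ N := by nlinarith
  have hNt2 : -(N:ℝ) ≤ N*t := by nlinarith
  obtain ⟨a, hadef⟩ : ∃ a : ℤ, a = min ⌊(N:ℝ)*t⌋ ((N:ℤ) - 1) := ⟨_, rfl⟩
  obtain ⟨θ, hθdef⟩ : ∃ θ : ℝ, θ = (N:ℝ)*t - a := ⟨_, rfl⟩
  have hfl : (a:ℝ) ≤ (N:ℝ)*t := by
    calc (a:ℝ) ≤ (⌊(N:ℝ)*t⌋ : ℝ) := by rw [hadef]; exact_mod_cast min_le_left _ _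
    _ ≤ (N:ℝ)*t := Int.floor_le _
  have hθ0 : 0 ≤ θ := by rw [hθdef]; linarith
  have hθ1 : θ ≤ 1 := by
    rw [hθdef]
    rcases le_or_gt ⌊(N:ℝ)*t⌋ ((N:ℤ) - 1) with h | h
    · have : a = ⌊(N:ℝ)*t⌋ := by rw [hadef]; exact min_eq_left h
      rw [this]
      have := Int.lt_floor_add_one ((N:ℝ)*t)
      linarith
    · have ha : a = (N:ℤ) - 1 := by rw [hadef]; exact min_eq_right (by omega)
      rw [ha]; push_cast; linarith
  have ha_lb : -(N:ℤ) ≤ a := by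
    have h1 : -(N:ℤ) ≤ ⌊(N:ℝ)*t⌋ := by
      rw [Int.le_floor]; push_cast; linarith
    have h2 : -(N:ℤ) ≤ (N:ℤ) - 1 := by omega
    rw [hadef]; exact le_min h1 h2
  have ha_ub : a ≤ (N:ℤ) - 1 := hadef ▸ min_le_right _ _
  have hmemA : a ∈ Finset.Icc (-(N:ℤ)) (N:ℤ) := Finset.mem_Icc.mpr ⟨ha_lb, by omega⟩
  have hmemB : a + 1 ∈ Finset.Icc (-(N:ℤ)) (N:ℤ) := Finset.mem_Icc.mpr ⟨by omega, by omega⟩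
  have hsupp : ∀ ℓ ∈ Finset.Icc (-(N:ℤ)) (N:ℤ),
      (if ℓ = a then 1-θ else if ℓ = a+1 then θ else 0) ≠ 0 → ℓ = a ∨ ℓ = a + 1 := by
    intro ℓ _ h
    by_cases h1 : ℓ = a
    · exact Or.inl h1
    by_cases h2 : ℓ = a + 1
    · exact Or.inr h2
    · simp [h1, h2] at h
  refine ⟨fun ℓ => if ℓ = a then 1-θ else if ℓ = a+1 then θ else 0, ⟨?_, a, hsupp⟩, ?_, ?_⟩
  · intro ℓ _; dsimp only; split_ifs <;> linarith
  · have := stmt6_twoPoint N _ a hsupp (fun _ => 1)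
    simp only [one_mul] at this
    rw [this, if_pos hmemA, if_pos hmemB]
    have hne : a + 1 ≠ a := by omega
    simp [hne]
  · have := stmt6_twoPoint N _ a hsupp (fun ℓ => (ℓ:ℝ)/N)
    rw [this, if_pos hmemA, if_pos hmemB]
    have hne : a + 1 ≠ a := by omega
    simp only [eq_self_iff_true, if_true, if_neg hne]
    have hcast : ((a+1:ℤ):ℝ) = (a:ℝ) + 1 := by push_cast; ring
    rw [hcast, hθdef]
    have hNne : (N:ℝ) ≠ 0 := ne_of_gt hN0
    field_simp
    ring

lemma stmt6_sum_rot {α β γ : Type*} [Fintype α] [Fintype β] [Fintype γ] (g : α → β → γ → ℝ) :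
    ∑ i, ∑ a, ∑ b, g i a b = ∑ a, ∑ b, ∑ i, g i a b := by
  rw [Finset.sum_comm]
  exact Finset.sum_congr rfl fun a _ => Finset.sum_comm

lemma stmt6_quad (n d : ℕ) (X : Matrix (Fin n) (Fin d) ℝ) (v : Fin d → Fin d → ℝ)
    (lam : Fin d → ℝ)
    (hdecomp : (1 / (n : ℝ)) • (Xᵀ * X) = ∑ j, lam j • Matrix.vecMulVec (v j) (v j)) :
    ∀ w : Fin d → ℝ, (1/(n:ℝ)) * ∑ i, (∑ j, X i j * w j)^2
      = ∑ j, lam j * (∑ i, v j i * w i)^2 := by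
  have hentry : ∀ a b, (1/(n:ℝ)) * ∑ i, X i a * X i b = ∑ j, lam j * (v j a * v j b) := by
    intro a b
    have h := congrFun (congrFun hdecomp a) b
    simpa [Matrix.mul_apply, Matrix.transpose_apply, Matrix.smul_apply, Matrix.sum_apply,
      Matrix.vecMulVec_apply, smul_eq_mul, one_div] using h
  intro w
  have lhs : (1/(n:ℝ)) * ∑ i, (∑ j, X i j * w j)^2
      = ∑ a, ∑ b, (w a * w b) * ((1/(n:ℝ)) * ∑ i, X i a * X i b) := by
    calc (1/(n:ℝ)) * ∑ i, (∑ j, X i j * w j)^2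
        = ∑ i, ∑ a, ∑ b, (1/(n:ℝ)) * ((X i a * w a) * (X i b * w b)) := by
          rw [Finset.mul_sum]
          refine Finset.sum_congr rfl fun i _ => ?_
          rw [sq, Finset.sum_mul_sum, Finset.mul_sum]
          refine Finset.sum_congr rfl fun a _ => ?_
          rw [Finset.mul_sum]
      _ = ∑ a, ∑ b, ∑ i, (1/(n:ℝ)) * ((X i a * w a) * (X i b * w b)) := stmt6_sum_rot _
      _ = ∑ a, ∑ b, (w a * w b) * ((1/(n:ℝ)) * ∑ i, X i a * X i b) := by
          refine Finset.sum_congr rfl fun a _ => Finset.sum_congr rfl fun b _ => ?_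
          rw [Finset.mul_sum, Finset.mul_sum]
          exact Finset.sum_congr rfl fun i _ => by ring
  have rhs : ∑ j, lam j * (∑ i, v j i * w i)^2
      = ∑ a, ∑ b, (w a * w b) * (∑ j, lam j * (v j a * v j b)) := by
    calc ∑ j, lam j * (∑ i, v j i * w i)^2
        = ∑ j, ∑ a, ∑ b, (w a * w b) * (lam j * (v j a * v j b)) := by
          refine Finset.sum_congr rfl fun j _ => ?_
          rw [sq, Finset.sum_mul_sum, Finset.mul_sum]
          refine Finset.sum_congr rfl fun a _ => ?_
          rw [Finset.mul_sum]
          exact Finset.sum_congr rfl fun b _ => by ring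
      _ = ∑ a, ∑ b, ∑ j, (w a * w b) * (lam j * (v j a * v j b)) := stmt6_sum_rot _
      _ = ∑ a, ∑ b, (w a * w b) * (∑ j, lam j * (v j a * v j b)) := by
          refine Finset.sum_congr rfl fun a _ => Finset.sum_congr rfl fun b _ => ?_
          rw [Finset.mul_sum]
  rw [lhs, rhs]
  refine Finset.sum_congr rfl fun a _ => Finset.sum_congr rfl fun b _ => ?_
  rw [hentry]

theorem stmt6 (n d k N : ℕ) (hn : 1 ≤ n) (hd : 1 ≤ d) (hk : 1 ≤ k) (hN : 1 ≤ N)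
    (ρ : ℝ) (hρ : 0 < ρ)
    (X : Matrix (Fin n) (Fin d) ℝ) (v : Fin d → Fin d → ℝ) (lam : Fin d → ℝ)
    (horth : ∀ j j' : Fin d, (∑ i, v j i * v j' i) = if j = j' then 1 else 0)
    (hmono : ∀ j j' : Fin d, j ≤ j' → lam j' ≤ lam j)
    (hnonneg : ∀ j, 0 ≤ lam j)
    (hdecomp : (1 / (n : ℝ)) • (Xᵀ * X) = ∑ j, lam j • Matrix.vecMulVec (v j) (v j))
    (opt ub : ℝ)
    (hopt : opt = sSup {r : ℝ | ∃ w : Fin d → ℝ,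
        Real.sqrt (∑ i, w i ^ 2) = 1 ∧ {i | w i ≠ 0}.ncard ≤ k ∧
        r = (1 / n) * ∑ i, max (|∑ j, X i j * w j| - ρ) 0 ^ 2})
    (hub : ub = sSup {r : ℝ | ∃ (w : Fin d → ℝ) (η : Fin d → ℤ → ℝ),
        Real.sqrt (∑ i, w i ^ 2) ≤ 1 ∧ {i | w i ≠ 0}.ncard ≤ k ∧
        (∀ j, IsSOSII N (η j)) ∧
        (∀ j, ∑ ℓ ∈ Finset.Icc (-(N : ℤ)) (N : ℤ), η j ℓ = 1) ∧
        (∀ j, (∑ i, v j i * w i) =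
          ∑ ℓ ∈ Finset.Icc (-(N : ℤ)) (N : ℤ), ((ℓ : ℝ) / N) * η j ℓ) ∧
        r = (∑ j, lam j * ∑ ℓ ∈ Finset.Icc (-(N : ℤ)) (N : ℤ), ((ℓ : ℝ) / N) ^ 2 * η j ℓ)
            + (1 / n) * ∑ i,
                (max (|∑ j, X i j * w j| - ρ) 0 ^ 2 - (∑ j, X i j * w j) ^ 2)}) :
    opt ≤ ub ∧ ub ≤ opt + (1 / (4 * N ^ 2)) * ∑ j, lam j := by
  subst hopt hub
  have hn0 : (0:ℝ) < n := by exact_mod_cast hn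
  have hN0 : (0:ℝ) < N := by exact_mod_cast hN
  have hquad := stmt6_quad n d X v lam hdecomp
  have hvnorm : ∀ j, ∑ i, (v j i)^2 = 1 := by
    intro j
    have h2 : ∑ i, v j i * v j i = 1 := by simpa using horth j j
    calc ∑ i, (v j i)^2 = ∑ i, v j i * v j i :=
          Finset.sum_congr rfl fun i _ => sq (v j i)
      _ = 1 := h2
  have hcs : ∀ (w : Fin d → ℝ), (∑ i, w i ^ 2) ≤ 1 → ∀ j, |∑ i, v j i * w i| ≤ 1 := by
    intro w hw j
    have h := Finset.sum_mul_sq_le_sq_mul_sq Finset.univ (v j) w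
    rw [hvnorm j] at h
    have hsq : (∑ i, v j i * w i)^2 ≤ 1 := by nlinarith
    exact abs_le.mpr ⟨by nlinarith, by nlinarith⟩
  have hmax_sq_le : ∀ t : ℝ, max (|t| - ρ) 0 ^ 2 ≤ t ^ 2 := by
    intro t
    have h1 : max (|t| - ρ) 0 ≤ |t| := max_le (by linarith [abs_nonneg t]) (abs_nonneg t)
    calc max (|t| - ρ) 0 ^ 2 ≤ |t| ^ 2 := pow_le_pow_left₀ (le_max_right _ _) h1 2
      _ = t ^ 2 := sq_abs t
  obtain ⟨i0⟩ : Nonempty (Fin d) := ⟨⟨0, hd⟩⟩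
  obtain ⟨w0, hw0a, hw0b⟩ : ∃ w0 : Fin d → ℝ, Real.sqrt (∑ i, w0 i ^ 2) = 1 ∧
      {i | w0 i ≠ 0}.ncard ≤ k := by
    refine ⟨fun i => if i = i0 then 1 else 0, ?_, ?_⟩
    · have h1 : ∀ i : Fin d, ((if i = i0 then (1:ℝ) else 0))^2 = if i = i0 then 1 else 0 := by
        intro i; split_ifs <;> norm_num
      rw [Finset.sum_congr rfl fun i _ => h1 i,
        Finset.sum_ite_eq' Finset.univ i0 (fun _ => (1:ℝ))]
      simp
    · have hset : {i : Fin d | (if i = i0 then (1:ℝ) else 0) ≠ 0} = {i0} := by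
        ext i; by_cases h : i = i0 <;> simp [h]
      rw [hset, Set.ncard_singleton]; exact hk
  have hS1bdd : BddAbove {r : ℝ | ∃ w : Fin d → ℝ,
      Real.sqrt (∑ i, w i ^ 2) = 1 ∧ {i | w i ≠ 0}.ncard ≤ k ∧
      r = (1 / n) * ∑ i, max (|∑ j, X i j * w j| - ρ) 0 ^ 2} := by
    refine ⟨∑ j, lam j, fun r hr => ?_⟩
    obtain ⟨w, hw1, hw2, hr⟩ := hr
    have hwsum : ∑ i, w i ^ 2 = 1 := by
      have h := Real.sq_sqrt (by positivity : (0:ℝ) ≤ ∑ i, w i ^ 2)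
      rw [hw1] at h; linarith [h]
    have h1 : r ≤ (1/(n:ℝ)) * ∑ i, (∑ j, X i j * w j)^2 := by
      rw [hr]
      apply mul_le_mul_of_nonneg_left _ (by positivity)
      exact Finset.sum_le_sum fun i _ => hmax_sq_le _
    rw [hquad w] at h1
    refine h1.trans (Finset.sum_le_sum fun j _ => ?_)
    have habs := hcs w (le_of_eq hwsum) j
    have : (∑ i, v j i * w i)^2 ≤ 1 := by
      have := abs_le.mp habs; nlinarith
    nlinarith [hnonneg j]
  have hS2bdd : BddAbove {r : ℝ | ∃ (w : Fin d → ℝ) (η : Fin d → ℤ → ℝ),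
      Real.sqrt (∑ i, w i ^ 2) ≤ 1 ∧ {i | w i ≠ 0}.ncard ≤ k ∧
      (∀ j, IsSOSII N (η j)) ∧
      (∀ j, ∑ ℓ ∈ Finset.Icc (-(N : ℤ)) (N : ℤ), η j ℓ = 1) ∧
      (∀ j, (∑ i, v j i * w i) =
        ∑ ℓ ∈ Finset.Icc (-(N : ℤ)) (N : ℤ), ((ℓ : ℝ) / N) * η j ℓ) ∧
      r = (∑ j, lam j * ∑ ℓ ∈ Finset.Icc (-(N : ℤ)) (N : ℤ), ((ℓ : ℝ) / N) ^ 2 * η j ℓ)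
          + (1 / n) * ∑ i,
              (max (|∑ j, X i j * w j| - ρ) 0 ^ 2 - (∑ j, X i j * w j) ^ 2)} := by
    refine ⟨∑ j, lam j, fun r hr => ?_⟩
    obtain ⟨w, η, hw1, hw2, hsos, hsum1, hmean, hr⟩ := hr
    have hμ : ∀ j, ∑ ℓ ∈ Finset.Icc (-(N : ℤ)) (N : ℤ), ((ℓ : ℝ) / N) ^ 2 * η j ℓ ≤ 1 := by
      intro j
      calc ∑ ℓ ∈ Finset.Icc (-(N : ℤ)) (N : ℤ), ((ℓ : ℝ) / N) ^ 2 * η j ℓ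
          ≤ ∑ ℓ ∈ Finset.Icc (-(N : ℤ)) (N : ℤ), η j ℓ := by
            refine Finset.sum_le_sum fun ℓ hℓ => ?_
            obtain ⟨hl1, hl2⟩ := Finset.mem_Icc.mp hℓ
            have hc1 : -(N:ℝ) ≤ (ℓ:ℝ) := by exact_mod_cast hl1
            have hc2 : (ℓ:ℝ) ≤ N := by exact_mod_cast hl2
            have hle1 : ((ℓ:ℝ)/N)^2 ≤ 1 := by
              rw [div_pow, div_le_one (by positivity)]; nlinarith
            exact mul_le_of_le_one_left ((hsos j).1 ℓ hℓ) hle1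
        _ = 1 := hsum1 j
    have hb : (1/(n:ℝ)) * ∑ i,
        (max (|∑ j, X i j * w j| - ρ) 0 ^ 2 - (∑ j, X i j * w j) ^ 2) ≤ 0 := by
      apply mul_nonpos_of_nonneg_of_nonpos (by positivity)
      exact Finset.sum_nonpos fun i _ => sub_nonpos.mpr (hmax_sq_le _)
    have h2 : ∑ j, lam j * ∑ ℓ ∈ Finset.Icc (-(N : ℤ)) (N : ℤ), ((ℓ : ℝ) / N) ^ 2 * η j ℓ
        ≤ ∑ j, lam j := by
      refine Finset.sum_le_sum fun j _ => ?_
      calc lam j * ∑ ℓ ∈ Finset.Icc (-(N : ℤ)) (N : ℤ), ((ℓ : ℝ) / N) ^ 2 * η j ℓ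
          ≤ lam j * 1 := mul_le_mul_of_nonneg_left (hμ j) (hnonneg j)
        _ = lam j := mul_one _
    rw [hr]; linarith
  obtain ⟨r0, hr0mem, hr0nn⟩ : ∃ r0, (r0 ∈ {r : ℝ | ∃ w : Fin d → ℝ,
      Real.sqrt (∑ i, w i ^ 2) = 1 ∧ {i | w i ≠ 0}.ncard ≤ k ∧
      r = (1 / n) * ∑ i, max (|∑ j, X i j * w j| - ρ) 0 ^ 2}) ∧ 0 ≤ r0 := by
    refine ⟨_, ⟨w0, hw0a, hw0b, rfl⟩, by positivity⟩
  have hoptnn : 0 ≤ sSup {r : ℝ | ∃ w : Fin d → ℝ,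
      Real.sqrt (∑ i, w i ^ 2) = 1 ∧ {i | w i ≠ 0}.ncard ≤ k ∧
      r = (1 / n) * ∑ i, max (|∑ j, X i j * w j| - ρ) 0 ^ 2} :=
    hr0nn.trans (le_csSup hS1bdd hr0mem)
  constructor
  · refine csSup_le ⟨r0, hr0mem⟩ fun r hr => ?_
    obtain ⟨w, hw1, hw2, hr⟩ := hr
    have hwsum : ∑ i, w i ^ 2 = 1 := by
      have h := Real.sq_sqrt (by positivity : (0:ℝ) ≤ ∑ i, w i ^ 2)
      rw [hw1] at h; linarith [h]
    choose η hsos hsum1 hmean using fun j =>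
      stmt6_exists_eta N hN (∑ i, v j i * w i) (hcs w (le_of_eq hwsum) j)
    have hmem : ((∑ j, lam j * ∑ ℓ ∈ Finset.Icc (-(N : ℤ)) (N : ℤ), ((ℓ : ℝ) / N) ^ 2 * η j ℓ)
        + (1 / (n:ℝ)) * ∑ i,
            (max (|∑ j, X i j * w j| - ρ) 0 ^ 2 - (∑ j, X i j * w j) ^ 2)) ∈
        {r : ℝ | ∃ (w : Fin d → ℝ) (η : Fin d → ℤ → ℝ),
          Real.sqrt (∑ i, w i ^ 2) ≤ 1 ∧ {i | w i ≠ 0}.ncard ≤ k ∧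
          (∀ j, IsSOSII N (η j)) ∧
          (∀ j, ∑ ℓ ∈ Finset.Icc (-(N : ℤ)) (N : ℤ), η j ℓ = 1) ∧
          (∀ j, (∑ i, v j i * w i) =
            ∑ ℓ ∈ Finset.Icc (-(N : ℤ)) (N : ℤ), ((ℓ : ℝ) / N) * η j ℓ) ∧
          r = (∑ j, lam j * ∑ ℓ ∈ Finset.Icc (-(N : ℤ)) (N : ℤ), ((ℓ : ℝ) / N) ^ 2 * η j ℓ)
              + (1 / n) * ∑ i,
                  (max (|∑ j, X i j * w j| - ρ) 0 ^ 2 - (∑ j, X i j * w j) ^ 2)} :=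
      ⟨w, η, le_of_eq hw1, hw2, hsos, hsum1, fun j => (hmean j).symm, rfl⟩
    have hsplit : (1/(n:ℝ)) * ∑ i,
        (max (|∑ j, X i j * w j| - ρ) 0 ^ 2 - (∑ j, X i j * w j) ^ 2)
        = (1/(n:ℝ)) * (∑ i, max (|∑ j, X i j * w j| - ρ) 0 ^ 2)
          - (1/(n:ℝ)) * ∑ i, (∑ j, X i j * w j) ^ 2 := by
      rw [Finset.sum_sub_distrib, mul_sub]
    have hlow : ∑ j, lam j * (∑ i, v j i * w i)^2
        ≤ ∑ j, lam j * ∑ ℓ ∈ Finset.Icc (-(N : ℤ)) (N : ℤ), ((ℓ : ℝ) / N) ^ 2 * η j ℓ := by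
      refine Finset.sum_le_sum fun j _ => ?_
      apply mul_le_mul_of_nonneg_left _ (hnonneg j)
      have hm := (stmt6_moment N hN (η j) (hsos j) (hsum1 j)).1
      rw [← hmean j]
      exact hm
    have hrle : r ≤ (∑ j, lam j *
          ∑ ℓ ∈ Finset.Icc (-(N : ℤ)) (N : ℤ), ((ℓ : ℝ) / N) ^ 2 * η j ℓ)
        + (1 / (n:ℝ)) * ∑ i,
            (max (|∑ j, X i j * w j| - ρ) 0 ^ 2 - (∑ j, X i j * w j) ^ 2) := by
      rw [hr, hsplit]
      have hq := hquad w
      push_cast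
      linarith [hlow, hq]
    exact hrle.trans (le_csSup hS2bdd hmem)
  · obtain ⟨η0, hsos0, hsum0, hmean0⟩ := stmt6_exists_eta N hN 0 (by norm_num)
    have hS2ne : ∃ r, r ∈ {r : ℝ | ∃ (w : Fin d → ℝ) (η : Fin d → ℤ → ℝ),
        Real.sqrt (∑ i, w i ^ 2) ≤ 1 ∧ {i | w i ≠ 0}.ncard ≤ k ∧
        (∀ j, IsSOSII N (η j)) ∧
        (∀ j, ∑ ℓ ∈ Finset.Icc (-(N : ℤ)) (N : ℤ), η j ℓ = 1) ∧
        (∀ j, (∑ i, v j i * w i) =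
          ∑ ℓ ∈ Finset.Icc (-(N : ℤ)) (N : ℤ), ((ℓ : ℝ) / N) * η j ℓ) ∧
        r = (∑ j, lam j * ∑ ℓ ∈ Finset.Icc (-(N : ℤ)) (N : ℤ), ((ℓ : ℝ) / N) ^ 2 * η j ℓ)
            + (1 / n) * ∑ i,
                (max (|∑ j, X i j * w j| - ρ) 0 ^ 2 - (∑ j, X i j * w j) ^ 2)} := by
      refine ⟨_, ⟨(fun _ => (0:ℝ)), fun _ => η0, ?_, ?_, fun _ => hsos0, fun _ => hsum0,
        fun j => ?_, rfl⟩⟩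
      · simp
      · have h0 : {i : Fin d | (0:ℝ) ≠ 0} = ∅ := by ext i; simp
        rw [h0]; simp
      · simp [hmean0]
    refine csSup_le hS2ne fun r hr => ?_
    obtain ⟨w, η, hw1, hw2, hsos, hsum1, hmean, hr⟩ := hr
    have hup : ∀ j, ∑ ℓ ∈ Finset.Icc (-(N : ℤ)) (N : ℤ), ((ℓ : ℝ) / N) ^ 2 * η j ℓ
        ≤ (∑ i, v j i * w i)^2 + 1/(4*(N:ℝ)^2) := by
      intro j
      have hm := (stmt6_moment N hN (η j) (hsos j) (hsum1 j)).2
      rw [← hmean j] at hm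
      exact hm
    have hkey1 : ∑ j, lam j * ∑ ℓ ∈ Finset.Icc (-(N : ℤ)) (N : ℤ), ((ℓ : ℝ) / N) ^ 2 * η j ℓ
        ≤ ∑ j, lam j * (∑ i, v j i * w i)^2 + (1/(4*(N:ℝ)^2)) * ∑ j, lam j := by
      calc ∑ j, lam j * ∑ ℓ ∈ Finset.Icc (-(N : ℤ)) (N : ℤ), ((ℓ : ℝ) / N) ^ 2 * η j ℓ
          ≤ ∑ j, lam j * ((∑ i, v j i * w i)^2 + 1/(4*(N:ℝ)^2)) :=
            Finset.sum_le_sum fun j _ => mul_le_mul_of_nonneg_left (hup j) (hnonneg j)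
        _ = ∑ j, lam j * (∑ i, v j i * w i)^2 + (1/(4*(N:ℝ)^2)) * ∑ j, lam j := by
            rw [Finset.mul_sum, ← Finset.sum_add_distrib]
            exact Finset.sum_congr rfl fun j _ => by ring
    have hmaxle : (1/(n:ℝ)) * ∑ i, max (|∑ j, X i j * w j| - ρ) 0 ^ 2
        ≤ sSup {r : ℝ | ∃ w : Fin d → ℝ,
          Real.sqrt (∑ i, w i ^ 2) = 1 ∧ {i | w i ≠ 0}.ncard ≤ k ∧
          r = (1 / n) * ∑ i, max (|∑ j, X i j * w j| - ρ) 0 ^ 2} := by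
      by_cases hw0 : w = 0
      · subst hw0
        have hz : ∀ i : Fin n, max (|∑ j, X i j * (0:Fin d → ℝ) j| - ρ) 0 ^ 2 = 0 := by
          intro i
          have h0 : (∑ j, X i j * (0:Fin d → ℝ) j) = 0 := by simp
          rw [h0]
          have hle : |(0:ℝ)| - ρ ≤ 0 := by rw [abs_zero]; linarith
          rw [max_eq_right hle]
          norm_num
        rw [Finset.sum_eq_zero fun i _ => hz i, mul_zero]
        exact hoptnn
      · obtain ⟨i1, hi1⟩ := Function.ne_iff.mp hw0
        have hi1' : w i1 ≠ 0 := by simpa using hi1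
        have hpos : 0 < ∑ i, w i ^ 2 := by
          refine Finset.sum_pos' (fun i _ => sq_nonneg _) ⟨i1, Finset.mem_univ _, ?_⟩
          exact (sq_nonneg _).lt_of_ne' (pow_ne_zero 2 hi1')
        obtain ⟨c, hcdef⟩ : ∃ c : ℝ, c = Real.sqrt (∑ i, w i ^ 2) := ⟨_, rfl⟩
        have hc0 : 0 < c := hcdef ▸ Real.sqrt_pos.mpr hpos
        have hc1 : c ≤ 1 := hcdef ▸ hw1
        have hc2 : c^2 = ∑ i, w i ^ 2 := hcdef ▸ Real.sq_sqrt (le_of_lt hpos)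
        have hwsum' : ∑ i, (w i / c) ^ 2 = 1 := by
          simp only [div_pow]
          rw [← Finset.sum_div, ← hc2]
          field_simp
        have hsupp' : {i | w i / c ≠ 0} = {i | w i ≠ 0} := by
          ext i
          simp [div_eq_zero_iff, ne_of_gt hc0]
        have hmem' : ((1:ℝ) / n) * ∑ i, max (|∑ j, X i j * (w j / c)| - ρ) 0 ^ 2 ∈
            {r : ℝ | ∃ w : Fin d → ℝ,
              Real.sqrt (∑ i, w i ^ 2) = 1 ∧ {i | w i ≠ 0}.ncard ≤ k ∧
              r = (1 / n) * ∑ i, max (|∑ j, X i j * w j| - ρ) 0 ^ 2} := by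
          refine ⟨fun j => w j / c, by rw [hwsum']; exact Real.sqrt_one, ?_, rfl⟩
          rw [hsupp']; exact hw2
        have hterm : ∀ i : Fin n, max (|∑ j, X i j * w j| - ρ) 0 ^ 2
            ≤ max (|∑ j, X i j * (w j / c)| - ρ) 0 ^ 2 := by
          intro i
          have hdiv : (∑ j, X i j * (w j / c)) = (∑ j, X i j * w j) / c := by
            rw [Finset.sum_div]
            exact Finset.sum_congr rfl fun j _ => by ring
          rw [hdiv, abs_div, abs_of_pos hc0]
          have habs : |∑ j, X i j * w j| ≤ |∑ j, X i j * w j| / c := by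
            rw [le_div_iff₀ hc0]
            exact mul_le_of_le_one_right (abs_nonneg _) hc1
          exact pow_le_pow_left₀ (le_max_right _ _)
            (max_le_max (sub_le_sub_right habs ρ) le_rfl) 2
        calc (1/(n:ℝ)) * ∑ i, max (|∑ j, X i j * w j| - ρ) 0 ^ 2
            ≤ (1/(n:ℝ)) * ∑ i, max (|∑ j, X i j * (w j / c)| - ρ) 0 ^ 2 := by
              apply mul_le_mul_of_nonneg_left _ (by positivity)
              exact Finset.sum_le_sum fun i _ => hterm i
          _ ≤ _ := le_csSup hS1bdd hmem'
    have hsplit : (1/(n:ℝ)) * ∑ i,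
        (max (|∑ j, X i j * w j| - ρ) 0 ^ 2 - (∑ j, X i j * w j) ^ 2)
        = (1/(n:ℝ)) * (∑ i, max (|∑ j, X i j * w j| - ρ) 0 ^ 2)
          - (1/(n:ℝ)) * ∑ i, (∑ j, X i j * w j) ^ 2 := by
      rw [Finset.sum_sub_distrib, mul_sub]
    have hq := hquad w
    have hNcast : (1:ℝ)/(4*((N:ℕ):ℝ)^2) = 1/(4*(N:ℝ)^2) := by norm_num
    rw [hr]
    push_cast
    rw [hsplit] at *
    push_cast at hsplit hq hkey1 hmaxle ⊢
    linarith [hkey1, hmaxle, hq, hsplit]
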